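/- Let J and J' be saturated strongly stable ideals in S = K[x_1,...,x_n] such that J̄ = J ∩ K[x_1,...,x_{n-1}] and J̄' = J' ∩ K[x_1,...,x_{n-1}] are both lex ideals. If J and J' have the same Hilbert polynomial, then J̄_d = J̄'_d for all sufficiently large d. -/

import Mathlib

open MvPolynomial

def mdeg {n : ℕ} (m : Fin n →₀ ℕ) : ℕ := ∑ i, m i

def IsMonomialIdeal {n : ℕ} {K : Type} [Field K] (J : Ideal (MvPolynomial (Fin n) K)) : Prop :=
  ∀ f ∈ J, ∀ m ∈ f.support, (monomial m (1 : K) : MvPolynomial (Fin n) K) ∈ J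

def StronglyStable {n : ℕ} {K : Type} [Field K] (J : Ideal (MvPolynomial (Fin n) K)) : Prop :=
  IsMonomialIdeal J ∧
  ∀ m : Fin n →₀ ℕ, (monomial m (1 : K) : MvPolynomial (Fin n) K) ∈ J →
    ∀ j i : Fin n, i < j → m j ≠ 0 →
      (monomial (m - Finsupp.single j 1 + Finsupp.single i 1) (1 : K) : MvPolynomial (Fin n) K) ∈ J

def Saturated {n : ℕ} {K : Type} [Field K] (J : Ideal (MvPolynomial (Fin n) K)) : Prop :=
  ∀ f : MvPolynomial (Fin n) K, (∃ k : ℕ, ∀ i : Fin n, (X i) ^ k * f ∈ J) → f ∈ J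

def LexLt {n : ℕ} (u v : Fin n →₀ ℕ) : Prop :=
  ∃ i : Fin n, (∀ j : Fin n, j < i → u j = v j) ∧ u i < v i

/-- `J̄ = J ∩ K[x_1,…,x_n]` is a lex ideal in `K[x_1,…,x_n]`: among monomials of `J` not
involving the last variable, the set is closed under passing to lex-larger monomials of the
same degree (again not involving the last variable). -/
def BarLex {n : ℕ} {K : Type} [Field K] (J : Ideal (MvPolynomial (Fin (n + 1)) K)) : Prop :=
  ∀ u v : Fin (n + 1) →₀ ℕ, u (Fin.last n) = 0 → v (Fin.last n) = 0 →
    (monomial u (1 : K) : MvPolynomial (Fin (n + 1)) K) ∈ J →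
    mdeg v = mdeg u → LexLt u v →
    (monomial v (1 : K) : MvPolynomial (Fin (n + 1)) K) ∈ J

noncomputable def gradedPiece {n : ℕ} {K : Type} [Field K] (I : Ideal (MvPolynomial (Fin n) K))
    (d : ℕ) : Submodule K (MvPolynomial (Fin n) K) :=
  (Submodule.restrictScalars K I) ⊓ homogeneousSubmodule (Fin n) K d

def IsHilbPoly {n : ℕ} {K : Type} [Field K] (I : Ideal (MvPolynomial (Fin n) K))
    (p : Polynomial ℚ) : Prop :=
  ∃ N : ℕ, ∀ d ≥ N, p.eval (d : ℚ) = (Module.finrank K (gradedPiece I d) : ℚ)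

section Aux
variable {k : ℕ} {K : Type} [Field K]

lemma mdeg_eq_degree (m : Fin k →₀ ℕ) : mdeg m = Finsupp.degree m := by
  rw [mdeg, Finsupp.degree]
  exact (Finset.sum_subset (Finset.subset_univ _)
    (fun i _ hi => Finsupp.notMem_support_iff.mp hi)).symm

lemma mdeg_add (a b : Fin k →₀ ℕ) : mdeg (a + b) = mdeg a + mdeg b := by
  simp [mdeg, Finsupp.add_apply, Finset.sum_add_distrib]

lemma mdeg_single (i : Fin k) (c : ℕ) : mdeg (Finsupp.single i c) = c := by
  simp [mdeg, Finsupp.single_apply]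

lemma mdeg_finite (d : ℕ) : {m : Fin k →₀ ℕ | mdeg m = d}.Finite := by
  have : {m : Fin k →₀ ℕ | mdeg m = d} ⊆ Set.Iic (Finsupp.equivFunOnFinite.symm (fun _ => d)) := by
    intro m hm i
    simp only [Finsupp.equivFunOnFinite]
    calc m i ≤ ∑ j, m j := Finset.single_le_sum (fun _ _ => Nat.zero_le _) (Finset.mem_univ i)
    _ = d := hm
  exact (Set.finite_Iic _).subset this

lemma X_mul_mono (i : Fin k) (m : Fin k →₀ ℕ) :
    X i * monomial m (1:K) = monomial (m + Finsupp.single i 1) 1 := by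
  rw [X, monomial_mul, one_mul, add_comm]
end Aux


section Main
variable {n : ℕ} {K : Type} [Field K]

/-- monomials of degree d in J -/
def TT (J : Ideal (MvPolynomial (Fin (n+1)) K)) (d : ℕ) : Set (Fin (n+1) →₀ ℕ) :=
  {m | mdeg m = d ∧ (monomial m (1:K) : MvPolynomial (Fin (n+1)) K) ∈ J}

/-- monomials of degree d in J not involving last variable -/
def BB (J : Ideal (MvPolynomial (Fin (n+1)) K)) (d : ℕ) : Set (Fin (n+1) →₀ ℕ) :=
  {m | mdeg m = d ∧ m (Fin.last n) = 0 ∧ (monomial m (1:K) : MvPolynomial (Fin (n+1)) K) ∈ J}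

lemma TT_finite (J : Ideal (MvPolynomial (Fin (n+1)) K)) (d : ℕ) : (TT J d).Finite :=
  (mdeg_finite d).subset (fun _ h => h.1)

lemma BB_finite (J : Ideal (MvPolynomial (Fin (n+1)) K)) (d : ℕ) : (BB J d).Finite :=
  (mdeg_finite d).subset (fun _ h => h.1)

lemma step {J : Ideal (MvPolynomial (Fin (n+1)) K)} (hJ : StronglyStable J) (hJs : Saturated J)
    (m : Fin (n+1) →₀ ℕ) :
    (monomial (m + Finsupp.single (Fin.last n) 1) (1:K) : MvPolynomial (Fin (n+1)) K) ∈ J ↔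
      (monomial m (1:K) : MvPolynomial (Fin (n+1)) K) ∈ J := by
  constructor
  · intro h
    apply hJs
    refine ⟨1, fun i => ?_⟩
    rw [pow_one, X_mul_mono]
    rcases lt_or_eq_of_le (Fin.le_last i) with hi | hi
    · have := hJ.2 _ h (Fin.last n) i hi (by simp)
      have he : m + Finsupp.single (Fin.last n) 1 - Finsupp.single (Fin.last n) 1 = m :=
        add_tsub_cancel_right _ _
      rwa [he] at this
    · rw [hi]; exact h
  · intro h
    rw [← X_mul_mono]
    exact Ideal.mul_mem_left _ _ h

lemma card_split {J : Ideal (MvPolynomial (Fin (n+1)) K)} (hJ : StronglyStable J)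
    (hJs : Saturated J) (d : ℕ) :
    (TT J (d+1)).ncard = (BB J (d+1)).ncard + (TT J d).ncard := by
  have hsplit : TT J (d+1) = BB J (d+1) ∪ (fun m => m + Finsupp.single (Fin.last n) 1) '' TT J d := by
    ext m
    constructor
    · rintro ⟨hd, hm⟩
      rcases Nat.eq_zero_or_pos (m (Fin.last n)) with h0 | h0
      · exact Or.inl ⟨hd, h0, hm⟩
      · refine Or.inr ⟨m - Finsupp.single (Fin.last n) 1, ⟨?_, ?_⟩, ?_⟩
        · have he : m - Finsupp.single (Fin.last n) 1 + Finsupp.single (Fin.last n) 1 = m := by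
            ext j
            rcases eq_or_ne j (Fin.last n) with rfl | hj
            · simp [Nat.sub_add_cancel h0]
            · simp [Finsupp.single_apply, Ne.symm hj]
          have h2 := mdeg_add (m - Finsupp.single (Fin.last n) 1) (Finsupp.single (Fin.last n) 1)
          rw [he, hd, mdeg_single] at h2
          omega
        · have he : m - Finsupp.single (Fin.last n) 1 + Finsupp.single (Fin.last n) 1 = m := by
            ext j
            rcases eq_or_ne j (Fin.last n) with rfl | hj
            · simp [Nat.sub_add_cancel h0]
            · simp [Finsupp.single_apply, Ne.symm hj]
          rw [← step hJ hJs, he]; exact hm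
        · ext j
          rcases eq_or_ne j (Fin.last n) with rfl | hj
          · simp [Nat.sub_add_cancel h0]
          · simp [Finsupp.single_apply, Ne.symm hj]
    · rintro (⟨hd, _, hm⟩ | ⟨m', ⟨hd', hm'⟩, rfl⟩)
      · exact ⟨hd, hm⟩
      · exact ⟨by rw [mdeg_add, mdeg_single, hd'], (step hJ hJs m').mpr hm'⟩
  have hdisj : Disjoint (BB J (d+1)) ((fun m => m + Finsupp.single (Fin.last n) 1) '' TT J d) := by
    rw [Set.disjoint_left]
    rintro m ⟨_, h0, _⟩ ⟨m', _, rfl⟩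
    simp [Finsupp.add_apply] at h0
  have hinj : Function.Injective (fun m : Fin (n+1) →₀ ℕ => m + Finsupp.single (Fin.last n) 1) :=
    add_left_injective _
  rw [hsplit, Set.ncard_union_eq hdisj (BB_finite J _) ((TT_finite J d).image _),
    Set.ncard_image_of_injective _ hinj]
end Main

section Rank
variable {n : ℕ} {K : Type} [Field K]

lemma gradedPiece_eq_span {J : Ideal (MvPolynomial (Fin (n+1)) K)} (hm : IsMonomialIdeal J)
    (d : ℕ) :
    gradedPiece J d = Submodule.span K
      (Set.range (fun m : TT J d => (monomial m.1 (1:K) : MvPolynomial (Fin (n+1)) K))) := by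
  apply le_antisymm
  · rintro f ⟨hfJ, hfh⟩
    have hfh' : f.IsHomogeneous d := (mem_homogeneousSubmodule d f).mp hfh
    rw [f.as_sum]
    apply Submodule.sum_mem
    intro v hv
    have hvJ : (monomial v (1:K) : MvPolynomial (Fin (n+1)) K) ∈ J := hm f hfJ v hv
    have hvd : mdeg v = d := by
      rw [mdeg_eq_degree, Finsupp.degree_eq_weight_one]
      exact hfh' (MvPolynomial.mem_support_iff.mp hv)
    have : monomial v (coeff v f) = coeff v f • monomial v (1:K) := by
      rw [smul_monomial, smul_eq_mul, mul_one]
    rw [this]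
    exact Submodule.smul_mem _ _ (Submodule.subset_span ⟨⟨v, hvd, hvJ⟩, rfl⟩)
  · rw [Submodule.span_le]
    rintro _ ⟨⟨v, hvd, hvJ⟩, rfl⟩
    refine ⟨hvJ, ?_⟩
    rw [SetLike.mem_coe, mem_homogeneousSubmodule]
    exact isHomogeneous_monomial _ (by rw [← mdeg_eq_degree]; exact hvd)

lemma finrank_gradedPiece {J : Ideal (MvPolynomial (Fin (n+1)) K)} (hm : IsMonomialIdeal J)
    (d : ℕ) : Module.finrank K (gradedPiece J d) = (TT J d).ncard := by
  have hfin : (TT J d).Finite := TT_finite J d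
  have : Fintype (TT J d) := hfin.fintype
  have hli : LinearIndependent K
      (fun m : TT J d => (monomial m.1 (1:K) : MvPolynomial (Fin (n+1)) K)) := by
    have hb := (MvPolynomial.basisMonomials (Fin (n+1)) K).linearIndependent
    rw [coe_basisMonomials] at hb
    exact hb.comp (fun m : TT J d => m.1) Subtype.val_injective
  have hb : Module.Basis (TT J d) K (gradedPiece J d) := by
    rw [gradedPiece_eq_span hm d]
    exact Module.Basis.span hli
  rw [Module.finrank_eq_card_basis hb, Set.ncard_eq_toFinset_card']
  simp [Set.toFinset_card]
end Rank


lemma lex_trichotomy {k : ℕ} {u v : Fin k →₀ ℕ} (h : u ≠ v) : LexLt u v ∨ LexLt v u := by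
  have hne : (Finset.univ.filter (fun i => u i ≠ v i)).Nonempty := by
    by_contra hc
    rw [Finset.not_nonempty_iff_eq_empty, Finset.filter_eq_empty_iff] at hc
    exact h (Finsupp.ext fun i => not_ne_iff.mp (hc (Finset.mem_univ i)))
  set i0 := (Finset.univ.filter (fun i => u i ≠ v i)).min' hne with hi0
  have hmem : i0 ∈ Finset.univ.filter (fun i => u i ≠ v i) := Finset.min'_mem _ _
  have hne0 : u i0 ≠ v i0 := (Finset.mem_filter.mp hmem).2
  have heq : ∀ j, j < i0 → u j = v j := by
    intro j hj
    by_contra hc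
    exact absurd (Finset.min'_le _ j (Finset.mem_filter.mpr ⟨Finset.mem_univ j, hc⟩))
      (not_le.mpr hj)
  rcases lt_or_gt_of_ne hne0 with hlt | hgt
  · exact Or.inl ⟨i0, heq, hlt⟩
  · exact Or.inr ⟨i0, fun j hj => (heq j hj).symm, hgt⟩

lemma BB_subset {n : ℕ} {K : Type} [Field K] {J J' : Ideal (MvPolynomial (Fin (n+1)) K)}
    (hbar : BarLex J) (hbar' : BarLex J') (d : ℕ)
    (hc : (BB J d).ncard ≤ (BB J' d).ncard) : BB J d ⊆ BB J' d := by
  intro m hm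
  by_contra hmB'
  have hsub : BB J' d ⊆ BB J d \ {m} := by
    intro v hv
    have hvm : v ≠ m := fun h => hmB' (h ▸ hv)
    rcases lex_trichotomy hvm with hlt | hgt
    · exact absurd
        (⟨hm.1, hm.2.1, hbar' v m hv.2.1 hm.2.1 hv.2.2 (by rw [hm.1, hv.1]) hlt⟩ : m ∈ BB J' d)
        hmB'
    · exact Set.mem_diff_of_mem
        ⟨hv.1, hv.2.1, hbar m v hm.2.1 hv.2.1 hm.2.2 (by rw [hv.1, hm.1]) hgt⟩
        hvm
  have h1 := Set.ncard_le_ncard hsub (BB_finite J d).diff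
  have h2 : (BB J d \ {m}).ncard < (BB J d).ncard :=
    Set.ncard_diff_singleton_lt_of_mem hm (BB_finite J d)
  omega


lemma hilb_diff {n : ℕ} {K : Type} [Field K] {J : Ideal (MvPolynomial (Fin (n+1)) K)}
    (hJ : StronglyStable J) (hJs : Saturated J) {p : Polynomial ℚ} {N : ℕ}
    (hN : ∀ d ≥ N, p.eval (d : ℚ) = (Module.finrank K (gradedPiece J d) : ℚ))
    {e : ℕ} (he : e ≥ N) :
    ((BB J (e+1)).ncard : ℚ) = p.eval ((e:ℚ)+1) - p.eval (e:ℚ) := by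
  have h1 := hN e he
  have h2 := hN (e+1) (by omega)
  rw [finrank_gradedPiece hJ.1] at h1 h2
  have h3 := card_split hJ hJs e
  push_cast at h2
  rw [h2, h1, h3]
  push_cast
  ring


/-- If `J` and `J'` are saturated strongly stable ideals whose restrictions `J̄`, `J̄'` to the
first `n` variables are lex, and `J`, `J'` have the same Hilbert polynomial, then
`J̄_d = J̄'_d` for all sufficiently large `d`. -/
theorem stmt_8 {n : ℕ} {K : Type} [Field K]
    (J J' : Ideal (MvPolynomial (Fin (n + 1)) K))
    (hJ : StronglyStable J) (hJ' : StronglyStable J')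
    (hJs : Saturated J) (hJ's : Saturated J')
    (hbar : BarLex J) (hbar' : BarLex J')
    (hp : ∃ p : Polynomial ℚ, IsHilbPoly J p ∧ IsHilbPoly J' p) :
    ∃ N : ℕ, ∀ d ≥ N, ∀ m : Fin (n + 1) →₀ ℕ, mdeg m = d → m (Fin.last n) = 0 →
      ((monomial m (1 : K) : MvPolynomial (Fin (n + 1)) K) ∈ J ↔
        (monomial m (1 : K) : MvPolynomial (Fin (n + 1)) K) ∈ J') := by
  obtain ⟨p, ⟨N1, hN1⟩, ⟨N2, hN2⟩⟩ := hp
  refine ⟨max N1 N2 + 1, fun d hd m hmd hml => ?_⟩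
  obtain ⟨e, rfl⟩ : ∃ e, d = e + 1 := ⟨d - 1, by omega⟩
  have hd1 := hilb_diff hJ hJs hN1 (show e ≥ N1 by omega)
  have hd2 := hilb_diff hJ' hJ's hN2 (show e ≥ N2 by omega)
  have hcard : (BB J (e+1)).ncard = (BB J' (e+1)).ncard := by
    have : ((BB J (e+1)).ncard : ℚ) = ((BB J' (e+1)).ncard : ℚ) := by rw [hd1, hd2]
    exact_mod_cast this
  have hsub1 := BB_subset hbar hbar' (e+1) hcard.le
  have hsub2 := BB_subset hbar' hbar (e+1) hcard.ge
  constructor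
  · intro h; exact (hsub1 ⟨hmd, hml, h⟩).2.2
  · intro h; exact (hsub2 ⟨hmd, hml, h⟩).2.2
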